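/- Suppose the polynomial ring R[x] is right quasi-duo. Then for all a, b ∈ R, the commutator ab − ba is a nilpotent element of R. -/

import Mathlib

/-- A ring is right quasi-duo if every maximal right ideal (a coatom in the
lattice of right ideals, i.e. submodules of `R` over `Rᵐᵒᵖ`) is two-sided. -/
def RightQuasiDuo (R : Type*) [Ring R] : Prop :=
  ∀ I : Submodule Rᵐᵒᵖ R, IsCoatom I → ∀ r x : R, x ∈ I → r * x ∈ I

/-- A ring is left quasi-duo if every maximal left ideal is two-sided. -/
def LeftQuasiDuo (R : Type*) [Ring R] : Prop :=
  ∀ I : Submodule R R, IsCoatom I → ∀ r x : R, x ∈ I → x * r ∈ I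

open Polynomial MulOpposite

namespace Stmt15Aux

variable {A : Type*} [Ring A]

/-- Right multiplication stays in a right ideal. -/
theorem mul_right_mem (I : Submodule Aᵐᵒᵖ A) {z : A} (hz : z ∈ I) (g : A) : z * g ∈ I := by
  have := I.smul_mem (op g) hz
  rwa [MulOpposite.smul_eq_mul_unop] at this

theorem eq_top_of_one_mem (I : Submodule Aᵐᵒᵖ A) (h1 : (1 : A) ∈ I) : I = ⊤ := by
  rw [Submodule.eq_top_iff']
  intro x
  simpa using mul_right_mem I h1 x

theorem exists_coatom_ge (J : Submodule Aᵐᵒᵖ A) (hJ : J ≠ ⊤) :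
    ∃ M, IsCoatom M ∧ J ≤ M := by
  have h : IsCoatomic (Submodule Aᵐᵒᵖ A) := by
    apply CompleteLattice.coatomic_of_top_compact
    have : (⊤ : Submodule Aᵐᵒᵖ A) = Submodule.span Aᵐᵒᵖ {1} := by
      apply le_antisymm
      · intro x _
        rw [Submodule.mem_span_singleton]
        exact ⟨MulOpposite.op x, by simp [MulOpposite.smul_eq_mul_unop]⟩
      · exact le_top
    rw [this]
    exact Submodule.singleton_span_isCompactElement 1
  rcases h.eq_top_or_exists_le_coatom J with h1 | h2
  · exact absurd h1 hJ
  · exact h2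

end Stmt15Aux

section EDef

variable {R : Type*} [Ring R]

/-- "Right evaluation" of a polynomial at `X + C a`, with coefficients on the right. -/
noncomputable def Estmt (a : R) : R[X] →+ R[X] where
  toFun f := f.sum fun i r => (X + C a) ^ i * C r
  map_zero' := by simp [Polynomial.sum_zero_index]
  map_add' f g :=
    Polynomial.sum_add_index f g (fun i r => (X + C a) ^ i * C r)
      (by intro i; simp) (fun i r s => by rw [C_add, mul_add])

theorem Estmt_apply (a : R) (f : R[X]) :
    Estmt a f = f.sum fun i r => (X + C a) ^ i * C r := by
  simp only [Estmt, AddMonoidHom.coe_mk, ZeroHom.coe_mk]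

theorem Estmt_monomial (a : R) (n : ℕ) (r : R) :
    Estmt a (monomial n r) = (X + C a) ^ n * C r := by
  rw [Estmt_apply]
  exact Polynomial.sum_monomial_index r _ (by simp)

theorem Estmt_C (a r : R) : Estmt a (C r) = C r := by
  have := Estmt_monomial a 0 r
  rw [pow_zero, one_mul, monomial_zero_left] at this
  exact this

theorem Estmt_one (a : R) : Estmt a 1 = 1 := by
  simpa using Estmt_C a 1

theorem Estmt_mul_X (a : R) (f : R[X]) : Estmt a (f * X) = (X + C a) * Estmt a f := by
  induction f using Polynomial.induction_on' with
  | add p q hp hq => rw [add_mul, map_add, hp, hq, map_add, mul_add]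
  | monomial n r =>
      rw [monomial_mul_X, Estmt_monomial, Estmt_monomial, pow_succ', mul_assoc]

theorem Estmt_mul_C (a : R) (f : R[X]) (s : R) : Estmt a (f * C s) = Estmt a f * C s := by
  induction f using Polynomial.induction_on' with
  | add p q hp hq => rw [add_mul, map_add, hp, hq, map_add, add_mul]
  | monomial n r =>
      rw [monomial_mul_C, Estmt_monomial, Estmt_monomial, C_mul, mul_assoc]

theorem commute_C_a (a : R) : Commute (C a) (X + C a) :=
  Commute.add_right (commute_X (C a)).symm (Commute.refl (C a))

theorem Estmt_C_a_mul (a : R) (f : R[X]) : Estmt a (C a * f) = C a * Estmt a f := by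
  induction f using Polynomial.induction_on' with
  | add p q hp hq => rw [mul_add, map_add, hp, hq, map_add, mul_add]
  | monomial n r =>
      rw [C_mul_monomial, Estmt_monomial, Estmt_monomial, C_mul, ← mul_assoc,
        ← ((commute_C_a a).pow_right n).eq, mul_assoc]

end EDef

section EMem

variable {R : Type*} [Ring R]

theorem Estmt_mul_Xpow (a : R) (f : R[X]) (j : ℕ) :
    Estmt a (f * X ^ j) = (X + C a) ^ j * Estmt a f := by
  induction j with
  | zero => simp
  | succ n ih =>
      rw [pow_succ, ← mul_assoc, Estmt_mul_X, ih, pow_succ', mul_assoc]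

/-- If `M` is a right ideal closed under left multiplication, then the set of `f` with
`Estmt a f ∈ M` is closed under right multiplication. -/
theorem Estmt_mul_mem (a : R) (M : Submodule (R[X])ᵐᵒᵖ R[X])
    (hM : ∀ r z : R[X], z ∈ M → r * z ∈ M)
    {f : R[X]} (hf : Estmt a f ∈ M) (g : R[X]) : Estmt a (f * g) ∈ M := by
  induction g using Polynomial.induction_on' with
  | add p q hp hq => rw [mul_add, map_add]; exact M.add_mem hp hq
  | monomial n s =>
      rw [← C_mul_X_pow_eq_monomial, ← mul_assoc, Estmt_mul_Xpow, Estmt_mul_C]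
      exact hM _ _ (Stmt15Aux.mul_right_mem M hf (C s))

end EMem

section Nilp

variable {R : Type*} [Ring R]

theorem nilpotent_of_rinv (c : R) (g : R[X]) (hg : (1 - C c * X) * g = 1) :
    IsNilpotent c := by
  have key : ∀ n, g.coeff n = c ^ n := by
    intro n
    induction n with
    | zero =>
        have h0 : ((1 - C c * X) * g).coeff 0 = (1 : R[X]).coeff 0 := by rw [hg]
        rw [sub_mul, one_mul, coeff_sub, mul_assoc, mul_coeff_zero, mul_coeff_zero,
          coeff_X_zero, zero_mul, mul_zero, sub_zero, coeff_one] at h0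
        simpa using h0
    | succ n ih =>
        have h1 : ((1 - C c * X) * g).coeff (n + 1) = (1 : R[X]).coeff (n + 1) := by rw [hg]
        rw [sub_mul, one_mul, coeff_sub, mul_assoc, coeff_C_mul, coeff_X_mul, coeff_one,
          if_neg (Nat.succ_ne_zero n)] at h1
        have h2 : g.coeff (n + 1) = c * g.coeff n := by
          have := sub_eq_zero.mp h1
          exact this
        rw [h2, ih, pow_succ']
  refine ⟨g.natDegree + 1, ?_⟩
  rw [← key]
  exact coeff_eq_zero_of_natDegree_lt (by omega)

end Nilp

theorem stmt15 (R : Type*) [Ring R] (h : RightQuasiDuo (Polynomial R)) :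
    ∀ a b : R, IsNilpotent (a * b - b * a) := by
  intro a b
  set c : R := a * b - b * a with hcdef
  suffices main : ∃ g : R[X], (1 - C c * X) * g = 1 by
    obtain ⟨g, hg⟩ := main
    exact nilpotent_of_rinv c g hg
  by_contra hno
  push_neg at hno
  set u : R[X] := 1 - C c * X with hu
  -- find a maximal right ideal containing u
  have hJ : Submodule.span (R[X])ᵐᵒᵖ {u} ≠ ⊤ := by
    intro htop
    have h1 : (1 : R[X]) ∈ Submodule.span (R[X])ᵐᵒᵖ {u} := htop ▸ Submodule.mem_top
    rw [Submodule.mem_span_singleton] at h1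
    obtain ⟨og, hog⟩ := h1
    rw [MulOpposite.smul_eq_mul_unop] at hog
    exact hno (MulOpposite.unop og) hog
  obtain ⟨M, hMco, hJM⟩ := Stmt15Aux.exists_coatom_ge _ hJ
  have hMu : u ∈ M := hJM (Submodule.mem_span_singleton_self u)
  have hM2 : ∀ r z : R[X], z ∈ M → r * z ∈ M := h M hMco
  have hMne : M ≠ ⊤ := hMco.1
  -- the right ideal N = E⁻¹(M)
  set N : Submodule (R[X])ᵐᵒᵖ (R[X]) :=
    { carrier := {f | Estmt a f ∈ M}
      add_mem' := fun {f} {g} hf hg => by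
        simp only [Set.mem_setOf_eq, map_add] at *
        exact M.add_mem hf hg
      zero_mem' := by simp only [Set.mem_setOf_eq, map_zero]; exact M.zero_mem
      smul_mem' := fun og f hf => by
        simp only [Set.mem_setOf_eq, MulOpposite.smul_eq_mul_unop] at *
        exact Estmt_mul_mem a M hM2 hf (MulOpposite.unop og) } with hNdef
  have hmemN : ∀ f : R[X], f ∈ N ↔ Estmt a f ∈ M := fun f => Iff.rfl
  -- the element F with E(F) = u
  set F : R[X] := C (1 + a * c) + C (-c) * X with hF
  have hECX : ∀ v : R, Estmt a (C v * X) = (X + C a) * C v := by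
    intro v
    have : C v * X = (monomial 1 v : R[X]) := by
      rw [← C_mul_X_pow_eq_monomial, pow_one]
    rw [this, Estmt_monomial, pow_one]
  have hEF : Estmt a F = u := by
    rw [hF, map_add, Estmt_C, hECX]
    have e1 : (X + C a) * C (-c) = C (-c) * X + C (a * -c) := by
      rw [add_mul, X_mul_C, ← C_mul]
    rw [e1, hu]
    have e2 : C (1 + a * c) + (C (-c) * X + C (a * -c)) =
        (C (1 + a * c) + C (a * -c)) + C (-c) * X := by abel
    rw [e2, ← C_add]
    have e3 : 1 + a * c + a * -c = 1 := by rw [mul_neg]; abel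
    rw [e3, C_1, C_neg, neg_mul, ← sub_eq_add_neg]
  have hFN : F ∈ N := by rw [hmemN, hEF]; exact hMu
  have hNne : N ≠ ⊤ := by
    intro htop
    have h1 : (1 : R[X]) ∈ N := htop ▸ Submodule.mem_top
    rw [hmemN, Estmt_one] at h1
    exact hMne (Stmt15Aux.eq_top_of_one_mem M h1)
  obtain ⟨N', hN'co, hNN'⟩ := Stmt15Aux.exists_coatom_ge N hNne
  have hN'2 : ∀ r z : R[X], z ∈ N' → r * z ∈ N' := h N' hN'co
  -- key step : every element of N' has E-value in M
  have key : ∀ f₀ ∈ N', Estmt a f₀ ∈ M := by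
    intro f₀ hf₀
    by_contra hy
    set y := Estmt a f₀ with hydef
    have hsup : M ⊔ Submodule.span (R[X])ᵐᵒᵖ {y} = ⊤ := by
      apply hMco.2
      refine lt_of_le_of_ne le_sup_left ?_
      intro heq
      exact hy (heq ▸ Submodule.mem_sup_right (Submodule.mem_span_singleton_self y))
    have h1 : (1 : R[X]) ∈ M ⊔ Submodule.span (R[X])ᵐᵒᵖ {y} := hsup ▸ Submodule.mem_top
    rw [Submodule.mem_sup] at h1
    obtain ⟨m, hm, z, hz, hmz⟩ := h1
    rw [Submodule.mem_span_singleton] at hz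
    obtain ⟨og, rfl⟩ := hz
    rw [MulOpposite.smul_eq_mul_unop] at hmz
    set g : R[X] := MulOpposite.unop og with hgdef
    -- iterates realizing X^i * y as E-values of elements of N'
    set T : ℕ → R[X] := fun i => Nat.rec f₀ (fun _ t => t * X - C a * t) i with hT
    have hT0 : T 0 = f₀ := rfl
    have hTs : ∀ i, T (i + 1) = T i * X - C a * T i := fun i => rfl
    have hTN' : ∀ i, T i ∈ N' := by
      intro i
      induction i with
      | zero => exact hf₀
      | succ n ih =>
          rw [hTs]
          exact N'.sub_mem (Stmt15Aux.mul_right_mem N' ih X) (hN'2 (C a) _ ih)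
    have hTE : ∀ i, Estmt a (T i) = X ^ i * y := by
      intro i
      induction i with
      | zero => rw [hT0, pow_zero, one_mul]
      | succ n ih =>
          rw [hTs, map_sub, Estmt_mul_X, Estmt_C_a_mul, ih, add_mul,
            add_sub_cancel_right, ← mul_assoc, ← pow_succ']
    set fs : R[X] := g.sum fun i gi => T i * C gi with hfs
    have hfsN' : fs ∈ N' := by
      rw [hfs, Polynomial.sum_def]
      exact Submodule.sum_mem N' fun i _ => Stmt15Aux.mul_right_mem N' (hTN' i) (C (g.coeff i))
    have hEfs : Estmt a fs = y * g := by
      rw [hfs, Polynomial.sum_def, map_sum]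
      calc ∑ i ∈ g.support, Estmt a (T i * C (g.coeff i))
          = ∑ i ∈ g.support, y * C (g.coeff i) * X ^ i := by
            refine Finset.sum_congr rfl fun i _ => ?_
            rw [Estmt_mul_C, hTE, mul_assoc, ← X_pow_mul, ← mul_assoc]
        _ = y * ∑ i ∈ g.support, C (g.coeff i) * X ^ i := by
            rw [Finset.mul_sum]
            exact Finset.sum_congr rfl fun i _ => by rw [mul_assoc]
        _ = y * g := by
            congr 1
            conv_rhs => rw [← Polynomial.sum_C_mul_X_pow_eq g]
            rw [Polynomial.sum_def]
    have hfs1 : fs - 1 ∈ N := by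
      rw [hmemN, map_sub, Estmt_one, hEfs]
      have e4 : y * g - 1 = -m := by rw [← hmz]; abel
      rw [e4]
      exact M.neg_mem hm
    have hone : (1 : R[X]) ∈ N' := by
      have h5 := N'.sub_mem hfsN' (hNN' hfs1)
      simpa using h5
    exact hN'co.1 (Stmt15Aux.eq_top_of_one_mem N' hone)
  -- final computation with s = b
  have hbF : Estmt a (C b * F) ∈ M := key _ (hN'2 (C b) F (hNN' hFN))
  have hCbF : C b * F = C (b * (1 + a * c)) + C (b * -c) * X := by
    rw [hF, mul_add, ← mul_assoc, ← C_mul, ← C_mul]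
  have hEbF : Estmt a (C b * F) = C (b * (1 + a * c)) + (X + C a) * C (b * -c) := by
    rw [hCbF, map_add, Estmt_C, hECX]
  have hCbu : C b * u ∈ M := hM2 (C b) u hMu
  have hCbu' : C b * u = C b - C (b * c) * X := by
    rw [hu, mul_sub, mul_one, ← mul_assoc, ← C_mul]
  have hdiff : C (b * (a * c) - a * (b * c)) ∈ M := by
    have h6 := M.sub_mem hbF hCbu
    have e7 : Estmt a (C b * F) - C b * u = C (b * (a * c) - a * (b * c)) := by
      rw [hEbF, hCbu']
      have e8 : (X + C a) * C (b * -c) = C (b * -c) * X + C (a * (b * -c)) := by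
        rw [add_mul, X_mul_C, ← C_mul]
      rw [e8]
      have e9 : b * (1 + a * c) = b + b * (a * c) := by rw [mul_add, mul_one]
      rw [e9, C_add]
      have e10 : b * -c = -(b * c) := by rw [mul_neg]
      rw [e10, C_neg, neg_mul, mul_neg, C_neg]
      have : C b + C (b * (a * c)) + (-(C (b * c) * X) + -C (a * (b * c))) -
          (C b - C (b * c) * X) = C (b * (a * c)) - C (a * (b * c)) := by abel
      rw [this, ← C_sub]
    rwa [e7] at h6
  have hcc : C (c * c) ∈ M := by
    have e11 : b * (a * c) - a * (b * c) = -(c * c) := by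
      rw [← mul_assoc, ← mul_assoc, ← sub_mul, hcdef]
      have : b * a - a * b = -(a * b - b * a) := by abel
      rw [this, neg_mul]
    rw [e11] at hdiff
    simpa using M.neg_mem hdiff
  -- contradiction : 1 ∈ M
  have hx1 : u * (1 + C c * X) ∈ M := Stmt15Aux.mul_right_mem M hMu _
  have hx2 : u * (1 + C c * X) = 1 - C (c * c) * X ^ 2 := by
    rw [hu]
    have e12 : (1 - C c * X) * (1 + C c * X) = 1 - C c * X * (C c * X) := by
      noncomm_ring
    rw [e12]
    have e13 : C c * X * (C c * X) = C (c * c) * X ^ 2 := by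
      rw [mul_assoc, ← mul_assoc X (C c) X, X_mul_C, mul_assoc, ← pow_two, ← mul_assoc,
        ← C_mul]
    rw [e13]
  have hx3 : C (c * c) * X ^ 2 ∈ M := Stmt15Aux.mul_right_mem M hcc (X ^ 2)
  have hone : (1 : R[X]) ∈ M := by
    have h7 := M.add_mem hx1 hx3
    rw [hx2] at h7
    simpa using h7
  exact hMne (Stmt15Aux.eq_top_of_one_mem M hone)
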